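/- Among all density matrices σ with fixed ordered spectrum x ∈ Σ, the quantum relative entropy S(ρ,σ) = tr(σ ln σ − σ ln ρ) with ρ positive definite is minimized when σ commutes with ρ and their eigenvalues are ordered in the same way in a joint eigenbasis; the minimal value is inf_{σ: s(σ)=x} S(ρ,σ) = ∑_{j=1}^d x_j (ln x_j − ln r_j), where r = s(ρ). -/

import Mathlib

open Matrix ComplexOrder Finset

/-- The logarithm of a Hermitian matrix, via the spectral decomposition
(functional calculus applied to `Real.log`). -/
noncomputable def hermLog {d : ℕ} {A : Matrix (Fin d) (Fin d) ℂ} (hA : A.IsHermitian) :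
    Matrix (Fin d) (Fin d) ℂ :=
  (hA.eigenvectorUnitary : Matrix (Fin d) (Fin d) ℂ)
    * Matrix.diagonal (fun i => (Real.log (hA.eigenvalues i) : ℂ))
    * star (hA.eigenvectorUnitary : Matrix (Fin d) (Fin d) ℂ)


lemma telesc (f : ℕ → ℝ) : ∀ d i, i ≤ d → ∑ k ∈ Ico i d, (f k - f (k+1)) = f i - f d := by
  intro d
  induction d with
  | zero => intro i hi; interval_cases i; simp
  | succ n ih =>
    intro i hi
    rcases Nat.lt_or_ge i (n+1) with h | h
    · have hi' : i ≤ n := Nat.lt_succ_iff.mp h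
      rw [Finset.sum_Ico_succ_top hi', ih i hi']; ring
    · have : i = n+1 := le_antisymm hi h
      subst this; simp

lemma topm (d m : ℕ) (hm : 0 < m) (hmd : m ≤ d) (b : ℕ → ℝ) (C : ℕ → ℝ)
    (hb : ∀ i j, i ≤ j → j < d → b j ≤ b i)
    (hC0 : ∀ j, j < d → 0 ≤ C j) (hC1 : ∀ j, j < d → C j ≤ 1)
    (hCs : ∑ j ∈ range d, C j = m) :
    ∑ j ∈ range d, C j * b j ≤ ∑ j ∈ range m, b j := by
  set t := b (m-1) with ht
  have hsplit : ∑ j ∈ range d, C j * (b j - t) =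
      ∑ j ∈ range m, C j * (b j - t) + ∑ j ∈ Ico m d, C j * (b j - t) := by
    rw [range_eq_Ico, ← Finset.sum_Ico_consecutive _ (Nat.zero_le m) hmd]
    rw [range_eq_Ico]
  have h1 : ∑ j ∈ range m, C j * (b j - t) ≤ ∑ j ∈ range m, (b j - t) := by
    apply Finset.sum_le_sum
    intro j hj
    have hj' := Finset.mem_range.mp hj
    have hbt : 0 ≤ b j - t := by
      have := hb j (m-1) (Nat.le_sub_one_of_lt hj') (by omega)
      linarith
    nlinarith [hC1 j (by omega), hC0 j (by omega)]
  have h2 : ∑ j ∈ Ico m d, C j * (b j - t) ≤ 0 := by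
    apply Finset.sum_nonpos
    intro j hj
    have hj' := Finset.mem_Ico.mp hj
    have hbt : b j - t ≤ 0 := by
      have := hb (m-1) j (by omega) hj'.2
      linarith
    nlinarith [hC0 j hj'.2]
  have key : ∑ j ∈ range d, C j * b j = ∑ j ∈ range d, C j * (b j - t) + t * m := by
    rw [← hCs]; rw [Finset.mul_sum]
    rw [← Finset.sum_add_distrib]
    apply Finset.sum_congr rfl; intro j _; ring
  rw [key, hsplit]
  have : ∑ j ∈ range m, (b j - t) = ∑ j ∈ range m, b j - t * m := by
    rw [Finset.sum_sub_distrib]; simp [mul_comm]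
  linarith

lemma dstoch (d : ℕ) (D : ℕ → ℕ → ℝ) (a b : ℕ → ℝ)
    (hD0 : ∀ i j, i < d → j < d → 0 ≤ D i j)
    (hrow : ∀ i, i < d → ∑ j ∈ range d, D i j = 1)
    (hcol : ∀ j, j < d → ∑ i ∈ range d, D i j = 1)
    (ha : ∀ i j, i ≤ j → j < d → a j ≤ a i) (ha0 : ∀ i, i < d → 0 ≤ a i)
    (hb : ∀ i j, i ≤ j → j < d → b j ≤ b i) :
    ∑ i ∈ range d, ∑ j ∈ range d, D i j * (a i * b j) ≤ ∑ i ∈ range d, a i * b i := by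
  set a' : ℕ → ℝ := fun k => if k < d then a k else 0 with ha'
  set δ : ℕ → ℝ := fun k => a' k - a' (k+1) with hδ
  have hδ0 : ∀ k, k < d → 0 ≤ δ k := by
    intro k hk
    simp only [hδ, ha']
    rcases Nat.lt_or_ge (k+1) d with h | h
    · simp [hk, h]; exact ha k (k+1) (Nat.le_succ k) h
    · simp [hk, Nat.not_lt.mpr h]; exact ha0 k hk
  have hAi : ∀ i, i < d → a i = ∑ k ∈ Ico i d, δ k := by
    intro i hi
    rw [hδ]
    rw [telesc a' d i (le_of_lt hi)]
    simp [ha', hi]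
  -- c i := weighted row value
  set c : ℕ → ℝ := fun i => ∑ j ∈ range d, D i j * b j with hc
  have lhs_eq : ∑ i ∈ range d, ∑ j ∈ range d, D i j * (a i * b j)
      = ∑ k ∈ range d, δ k * ∑ i ∈ range (k+1), c i := by
    have e1 : ∀ i ∈ range d, ∑ j ∈ range d, D i j * (a i * b j) = a i * c i := by
      intro i _
      rw [hc, Finset.mul_sum]
      apply Finset.sum_congr rfl; intro j _; ring
    rw [Finset.sum_congr rfl e1]
    have e2 : ∀ i ∈ range d, a i * c i = ∑ k ∈ Ico i d, δ k * c i := by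
      intro i hi
      rw [hAi i (Finset.mem_range.mp hi), Finset.sum_mul]
    rw [Finset.sum_congr rfl e2]
    rw [range_eq_Ico, Finset.sum_Ico_Ico_comm]
    apply Finset.sum_congr rfl; intro k _
    rw [Finset.mul_sum]
    rw [range_eq_Ico]
  have rhs_eq : ∑ i ∈ range d, a i * b i = ∑ k ∈ range d, δ k * ∑ i ∈ range (k+1), b i := by
    have e2 : ∀ i ∈ range d, a i * b i = ∑ k ∈ Ico i d, δ k * b i := by
      intro i hi
      rw [hAi i (Finset.mem_range.mp hi), Finset.sum_mul]
    rw [Finset.sum_congr rfl e2]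
    rw [range_eq_Ico, Finset.sum_Ico_Ico_comm]
    apply Finset.sum_congr rfl; intro k _
    rw [Finset.mul_sum]
    rw [range_eq_Ico]
  rw [lhs_eq, rhs_eq]
  apply Finset.sum_le_sum
  intro k hk
  have hk' := Finset.mem_range.mp hk
  apply mul_le_mul_of_nonneg_left _ (hδ0 k hk')
  -- ∑_{i<k+1} c i ≤ ∑_{i<k+1} b i
  set C : ℕ → ℝ := fun j => ∑ i ∈ range (k+1), D i j with hC
  have hswap : ∑ i ∈ range (k+1), c i = ∑ j ∈ range d, C j * b j := by
    rw [hc, hC]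
    rw [Finset.sum_comm]
    apply Finset.sum_congr rfl; intro j _
    rw [Finset.sum_mul]
  rw [hswap]
  apply topm d (k+1) (Nat.succ_pos k) hk' b C hb
  · intro j hj
    exact Finset.sum_nonneg fun i hi => hD0 i j (by have := Finset.mem_range.mp hi; omega) hj
  · intro j hj
    rw [hC]
    calc ∑ i ∈ range (k+1), D i j ≤ ∑ i ∈ range d, D i j := by
          apply Finset.sum_le_sum_of_subset_of_nonneg
          · exact Finset.range_subset_range.mpr (by omega)
          · intro i hi _; exact hD0 i j (Finset.mem_range.mp hi) hj
      _ = 1 := hcol j hj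
  · rw [hC, Finset.sum_comm]
    have : ∀ i ∈ range (k+1), ∑ j ∈ range d, D i j = 1 := by
      intro i hi
      exact hrow i (by have := Finset.mem_range.mp hi; omega)
    rw [Finset.sum_congr rfl this]
    simp


variable {d : ℕ}

lemma herm_conj (U : Matrix (Fin d) (Fin d) ℂ) (a : Fin d → ℝ) :
    (U * Matrix.diagonal (fun i => (a i : ℂ)) * Uᴴ).IsHermitian := by
  unfold Matrix.IsHermitian
  simp only [conjTranspose_mul, conjTranspose_conjTranspose, diagonal_conjTranspose]
  have : star (fun i => (a i : ℂ)) = fun i => (a i : ℂ) := by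
    funext i; simp [Pi.star_apply, Complex.conj_ofReal]
  rw [this, Matrix.mul_assoc]

lemma rowsum_one {Q : Matrix (Fin d) (Fin d) ℂ} (h : Q * Qᴴ = 1) (i : Fin d) :
    ∑ j, Complex.normSq (Q i j) = 1 := by
  have := congrFun (congrFun h i) i
  simp only [Matrix.mul_apply, Matrix.one_apply_eq, conjTranspose_apply] at this
  have h3 : ∑ j, ((Complex.normSq (Q i j) : ℝ) : ℂ) = 1 := by
    rw [← this]; apply Finset.sum_congr rfl; intro j _
    rw [show star (Q i j) = (starRingEnd ℂ) (Q i j) from rfl, Complex.mul_conj]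
  have := congrArg Complex.re h3
  simpa using this

lemma colsum_one {Q : Matrix (Fin d) (Fin d) ℂ} (h : Qᴴ * Q = 1) (j : Fin d) :
    ∑ i, Complex.normSq (Q i j) = 1 := by
  have := congrFun (congrFun h j) j
  simp only [Matrix.mul_apply, Matrix.one_apply_eq, conjTranspose_apply] at this
  have h3 : ∑ i, ((Complex.normSq (Q i j) : ℝ) : ℂ) = 1 := by
    rw [← this]; apply Finset.sum_congr rfl; intro i _
    rw [mul_comm, show star (Q i j) = (starRingEnd ℂ) (Q i j) from rfl, Complex.mul_conj]
  have := congrArg Complex.re h3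
  simpa using this

lemma Q_unitary {U W : Matrix (Fin d) (Fin d) ℂ}
    (hU : U ∈ Matrix.unitaryGroup (Fin d) ℂ) (hW : W ∈ Matrix.unitaryGroup (Fin d) ℂ) :
    (Uᴴ * W) * (Uᴴ * W)ᴴ = 1 ∧ (Uᴴ * W)ᴴ * (Uᴴ * W) = 1 := by
  have hU1 : U * Uᴴ = 1 := by
    have := Matrix.mem_unitaryGroup_iff.mp hU; rwa [Matrix.star_eq_conjTranspose] at this
  have hU2 : Uᴴ * U = 1 := by
    have := Matrix.mem_unitaryGroup_iff'.mp hU; rwa [Matrix.star_eq_conjTranspose] at this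
  have hW1 : W * Wᴴ = 1 := by
    have := Matrix.mem_unitaryGroup_iff.mp hW; rwa [Matrix.star_eq_conjTranspose] at this
  have hW2 : Wᴴ * W = 1 := by
    have := Matrix.mem_unitaryGroup_iff'.mp hW; rwa [Matrix.star_eq_conjTranspose] at this
  constructor
  · simp only [conjTranspose_mul, conjTranspose_conjTranspose]
    calc Uᴴ * W * (Wᴴ * U) = Uᴴ * (W * Wᴴ) * U := by
          simp only [Matrix.mul_assoc]
      _ = 1 := by rw [hW1, Matrix.mul_one, hU2]
  · simp only [conjTranspose_mul, conjTranspose_conjTranspose]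
    calc Wᴴ * U * (Uᴴ * W) = Wᴴ * (U * Uᴴ) * W := by
          simp only [Matrix.mul_assoc]
      _ = 1 := by rw [hU1, Matrix.mul_one, hW2]

lemma trace_form (U W : Matrix (Fin d) (Fin d) ℂ)
    (hU : U ∈ Matrix.unitaryGroup (Fin d) ℂ)
    (a b : Fin d → ℝ) :
    (Matrix.trace ((U * Matrix.diagonal (fun i => (a i : ℂ)) * Uᴴ)
        * (W * Matrix.diagonal (fun i => (b i : ℂ)) * Wᴴ))).re
      = ∑ i, ∑ j, a i * b j * Complex.normSq ((Uᴴ * W) i j) := by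
  have hU2 : Uᴴ * U = 1 := by
    have := Matrix.mem_unitaryGroup_iff'.mp hU; rwa [Matrix.star_eq_conjTranspose] at this
  set Q := Uᴴ * W with hQ
  set Da := Matrix.diagonal (fun i => (a i : ℂ)) with hDa
  set Db := Matrix.diagonal (fun i => (b i : ℂ)) with hDb
  set M := W * Db * Wᴴ with hM
  have step : Matrix.trace (U * Da * Uᴴ * M) = Matrix.trace (Da * (Q * Db * Qᴴ)) := by
    have e1 : U * Da * Uᴴ * M = U * (Da * (Uᴴ * M)) := by
      simp only [Matrix.mul_assoc]
    have e2 : Da * (Uᴴ * M) * U = Da * (Q * Db * Qᴴ) := by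
      rw [hM, hQ]
      simp only [conjTranspose_mul, conjTranspose_conjTranspose, Matrix.mul_assoc]
    rw [e1, Matrix.trace_mul_comm, e2]
  rw [step]
  have entry : ∀ i, (Da * (Q * Db * Qᴴ)) i i
      = ∑ j, ((a i * b j * Complex.normSq (Q i j) : ℝ) : ℂ) := by
    intro i
    rw [hDa, Matrix.diagonal_mul]
    have : (Q * Db * Qᴴ) i i = ∑ j, Q i j * (b j : ℂ) * star (Q i j) := by
      rw [Matrix.mul_apply]
      apply Finset.sum_congr rfl; intro j _
      rw [hDb, Matrix.mul_diagonal, conjTranspose_apply]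
    rw [this, Finset.mul_sum]
    apply Finset.sum_congr rfl; intro j _
    rw [show star (Q i j) = (starRingEnd ℂ) (Q i j) from rfl]
    rw [show (a i : ℂ) * (Q i j * (b j : ℂ) * (starRingEnd ℂ) (Q i j))
        = (a i : ℂ) * (b j : ℂ) * (Q i j * (starRingEnd ℂ) (Q i j)) by ring]
    rw [Complex.mul_conj]
    push_cast
    ring
  have : Matrix.trace (Da * (Q * Db * Qᴴ))
      = ∑ i, ∑ j, ((a i * b j * Complex.normSq (Q i j) : ℝ) : ℂ) := by
    rw [Matrix.trace]
    exact Finset.sum_congr rfl fun i _ => entry i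
  rw [this]
  push_cast
  simp

lemma intertwine {U W : Matrix (Fin d) (Fin d) ℂ}
    (hU : U ∈ Matrix.unitaryGroup (Fin d) ℂ) (hW : W ∈ Matrix.unitaryGroup (Fin d) ℂ)
    {a b : Fin d → ℝ}
    (hE : U * Matrix.diagonal (fun i => (a i : ℂ)) * Uᴴ
        = W * Matrix.diagonal (fun i => (b i : ℂ)) * Wᴴ) :
    ∀ i j, (Uᴴ * W) i j ≠ 0 → a i = b j := by
  have hU2 : Uᴴ * U = 1 := by
    have := Matrix.mem_unitaryGroup_iff'.mp hU; rwa [Matrix.star_eq_conjTranspose] at this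
  have hW2 : Wᴴ * W = 1 := by
    have := Matrix.mem_unitaryGroup_iff'.mp hW; rwa [Matrix.star_eq_conjTranspose] at this
  set Da := Matrix.diagonal (fun i => (a i : ℂ)) with hDa
  set Db := Matrix.diagonal (fun i => (b i : ℂ)) with hDb
  have key : Da * (Uᴴ * W) = (Uᴴ * W) * Db := by
    have := congrArg (fun M => Uᴴ * M * W) hE
    calc Da * (Uᴴ * W) = Uᴴ * (U * Da * Uᴴ) * W := by
          rw [show Uᴴ * (U * Da * Uᴴ) * W = (Uᴴ * U) * Da * (Uᴴ * W) by
            simp only [Matrix.mul_assoc], hU2, Matrix.one_mul]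
      _ = Uᴴ * (W * Db * Wᴴ) * W := by rw [hE]
      _ = (Uᴴ * W) * Db := by
          rw [show Uᴴ * (W * Db * Wᴴ) * W = (Uᴴ * W) * Db * (Wᴴ * W) by
            simp only [Matrix.mul_assoc], hW2, Matrix.mul_one]
  intro i j hij
  have := congrFun (congrFun key i) j
  rw [Matrix.diagonal_mul, Matrix.mul_diagonal] at this
  have h2 : ((a i : ℂ) - (b j : ℂ)) * (Uᴴ * W) i j = 0 := by
    rw [sub_mul, this]; ring
  rcases mul_eq_zero.mp h2 with h | h
  · have : (a i : ℂ) = (b j : ℂ) := by linear_combination h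
    exact_mod_cast this
  · exact absurd h hij

lemma trace_pair (U W : Matrix (Fin d) (Fin d) ℂ)
    (hU : U ∈ Matrix.unitaryGroup (Fin d) ℂ) (hW : W ∈ Matrix.unitaryGroup (Fin d) ℂ)
    (a f g : Fin d → ℝ)
    (hmatch : ∀ i j, (Uᴴ * W) i j ≠ 0 → g j = f i) :
    (Matrix.trace ((U * Matrix.diagonal (fun i => (a i : ℂ)) * Uᴴ)
        * (W * Matrix.diagonal (fun i => (g i : ℂ)) * Wᴴ))).re
      = ∑ i, a i * f i := by
  rw [trace_form U W hU a g]
  have row1 := (Q_unitary hU hW).1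
  apply Finset.sum_congr rfl
  intro i _
  have : ∀ j ∈ Finset.univ, a i * g j * Complex.normSq ((Uᴴ * W) i j)
      = (a i * f i) * Complex.normSq ((Uᴴ * W) i j) := by
    intro j _
    by_cases h : (Uᴴ * W) i j = 0
    · rw [h]; simp
    · rw [hmatch i j h]
  rw [Finset.sum_congr rfl this, ← Finset.mul_sum, rowsum_one row1 i, mul_one]


lemma spectral' {A : Matrix (Fin d) (Fin d) ℂ} (hA : A.IsHermitian) :
    A = (hA.eigenvectorUnitary : Matrix (Fin d) (Fin d) ℂ)
      * Matrix.diagonal (fun i => ((hA.eigenvalues i : ℝ) : ℂ))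
      * (hA.eigenvectorUnitary : Matrix (Fin d) (Fin d) ℂ)ᴴ := by
  have := hA.spectral_theorem
  rw [Unitary.conjStarAlgAut_apply, Matrix.star_eq_conjTranspose] at this
  exact this

lemma hermLog_eq {A : Matrix (Fin d) (Fin d) ℂ} (hA : A.IsHermitian) :
    hermLog hA = (hA.eigenvectorUnitary : Matrix (Fin d) (Fin d) ℂ)
      * Matrix.diagonal (fun i => (Real.log (hA.eigenvalues i) : ℂ))
      * (hA.eigenvectorUnitary : Matrix (Fin d) (Fin d) ℂ)ᴴ := by
  rw [hermLog, Matrix.star_eq_conjTranspose]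

lemma trace_hermLog (U : Matrix (Fin d) (Fin d) ℂ) (hU : U ∈ Matrix.unitaryGroup (Fin d) ℂ)
    (a : Fin d → ℝ) (σ : Matrix (Fin d) (Fin d) ℂ)
    (hσdef : σ = U * Matrix.diagonal (fun i => (a i : ℂ)) * Uᴴ) (hσ : σ.IsHermitian) :
    (Matrix.trace (σ * hermLog hσ)).re = ∑ i, a i * Real.log (a i) := by
  set W := (hσ.eigenvectorUnitary : Matrix (Fin d) (Fin d) ℂ) with hWdef
  have hW : W ∈ Matrix.unitaryGroup (Fin d) ℂ := SetLike.coe_mem _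
  have hE : U * Matrix.diagonal (fun i => (a i : ℂ)) * Uᴴ
      = W * Matrix.diagonal (fun i => ((hσ.eigenvalues i : ℝ) : ℂ)) * Wᴴ := by
    rw [← hσdef]; exact spectral' hσ
  have hmatch : ∀ i j, (Uᴴ * W) i j ≠ 0 → Real.log (hσ.eigenvalues j) = Real.log (a i) := by
    intro i j h
    rw [intertwine hU hW hE i j h]
  have h1 : σ * hermLog hσ = (U * Matrix.diagonal (fun i => (a i : ℂ)) * Uᴴ) * hermLog hσ :=
    congrArg (· * hermLog hσ) hσdef
  rw [h1, hermLog_eq]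
  exact trace_pair U W hU hW a (fun i => Real.log (a i)) (fun j => Real.log (hσ.eigenvalues j))
    hmatch

lemma conj_comm (V : Matrix (Fin d) (Fin d) ℂ) (hV : V ∈ Matrix.unitaryGroup (Fin d) ℂ)
    (va vb : Fin d → ℂ) :
    (V * Matrix.diagonal va * Vᴴ) * (V * Matrix.diagonal vb * Vᴴ)
      = (V * Matrix.diagonal vb * Vᴴ) * (V * Matrix.diagonal va * Vᴴ) := by
  have hV2 : Vᴴ * V = 1 := by
    have := Matrix.mem_unitaryGroup_iff'.mp hV; rwa [Matrix.star_eq_conjTranspose] at this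
  have key : ∀ u w : Fin d → ℂ, (V * Matrix.diagonal u * Vᴴ) * (V * Matrix.diagonal w * Vᴴ)
      = V * Matrix.diagonal (fun i => u i * w i) * Vᴴ := by
    intro u w
    have h1 : Vᴴ * (V * (Matrix.diagonal w * Vᴴ)) = Matrix.diagonal w * Vᴴ := by
      rw [← Matrix.mul_assoc, hV2, Matrix.one_mul]
    calc (V * Matrix.diagonal u * Vᴴ) * (V * Matrix.diagonal w * Vᴴ)
        = V * (Matrix.diagonal u * (Vᴴ * (V * (Matrix.diagonal w * Vᴴ)))) := by
          simp only [Matrix.mul_assoc]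
      _ = V * (Matrix.diagonal u * (Matrix.diagonal w * Vᴴ)) := by rw [h1]
      _ = V * (Matrix.diagonal u * Matrix.diagonal w) * Vᴴ := by
          simp only [Matrix.mul_assoc]
      _ = V * Matrix.diagonal (fun i => u i * w i) * Vᴴ := by
          rw [Matrix.diagonal_mul_diagonal]
  rw [key, key]
  have : (fun i => va i * vb i) = (fun i => vb i * va i) := funext fun i => mul_comm _ _
  rw [this]


theorem relative_entropy_min_over_fixed_spectrum
    {d : ℕ} (ρ : Matrix (Fin d) (Fin d) ℂ)
    (r x : ℕ → ℝ)
    (hrmono : ∀ i j, i ≤ j → j < d → r j ≤ r i) (hrpos : ∀ j, j < d → 0 < r j)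
    (hrsum : ∑ j ∈ range d, r j = 1)
    (hxmono : ∀ i j, i ≤ j → j < d → x j ≤ x i) (hxnn : ∀ j, j < d → 0 ≤ x j)
    (hxsum : ∑ j ∈ range d, x j = 1)
    (V : Matrix (Fin d) (Fin d) ℂ) (hV : V ∈ Matrix.unitaryGroup (Fin d) ℂ)
    (hρdef : ρ = V * Matrix.diagonal (fun i : Fin d => (r i.1 : ℂ)) * Vᴴ)
    (hρ : ρ.IsHermitian) :
    (∀ U ∈ Matrix.unitaryGroup (Fin d) ℂ,
      ∀ σ : Matrix (Fin d) (Fin d) ℂ,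
        σ = U * Matrix.diagonal (fun i : Fin d => (x i.1 : ℂ)) * Uᴴ →
        ∀ hσ : σ.IsHermitian,
          ∑ j ∈ range d, x j * (Real.log (x j) - Real.log (r j))
            ≤ (Matrix.trace (σ * hermLog hσ - σ * hermLog hρ)).re) ∧
    (∃ U ∈ Matrix.unitaryGroup (Fin d) ℂ,
      ∃ (σ : Matrix (Fin d) (Fin d) ℂ) (hσ : σ.IsHermitian),
        σ = U * Matrix.diagonal (fun i : Fin d => (x i.1 : ℂ)) * Uᴴ ∧
        σ * ρ = ρ * σ ∧
        (Matrix.trace (σ * hermLog hσ - σ * hermLog hρ)).re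
          = ∑ j ∈ range d, x j * (Real.log (x j) - Real.log (r j))) := by
  have hermLog_eq : ∀ {A : Matrix (Fin d) (Fin d) ℂ} (hA : A.IsHermitian),
      hermLog hA = (hA.eigenvectorUnitary : Matrix (Fin d) (Fin d) ℂ)
        * Matrix.diagonal (fun i => (Real.log (hA.eigenvalues i) : ℂ))
        * (hA.eigenvectorUnitary : Matrix (Fin d) (Fin d) ℂ)ᴴ := by
    intro A hA
    rw [hermLog, Matrix.star_eq_conjTranspose]
  have trace_hermLog : ∀ (U : Matrix (Fin d) (Fin d) ℂ),
      U ∈ Matrix.unitaryGroup (Fin d) ℂ → ∀ (a : Fin d → ℝ) (σ : Matrix (Fin d) (Fin d) ℂ)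
      (hσdef : σ = U * Matrix.diagonal (fun i => (a i : ℂ)) * Uᴴ) (hσ : σ.IsHermitian),
      (Matrix.trace (σ * hermLog hσ)).re = ∑ i, a i * Real.log (a i) := by
    intro U hU a σ hσdef hσ
    set W := (hσ.eigenvectorUnitary : Matrix (Fin d) (Fin d) ℂ) with hWdef
    have hW : W ∈ Matrix.unitaryGroup (Fin d) ℂ := SetLike.coe_mem _
    have hE : U * Matrix.diagonal (fun i => (a i : ℂ)) * Uᴴ
        = W * Matrix.diagonal (fun i => ((hσ.eigenvalues i : ℝ) : ℂ)) * Wᴴ := by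
      rw [← hσdef]; exact spectral' hσ
    have hmatch : ∀ i j, (Uᴴ * W) i j ≠ 0 → Real.log (hσ.eigenvalues j) = Real.log (a i) := by
      intro i j h
      rw [intertwine hU hW hE i j h]
    have h1 : σ * hermLog hσ = (U * Matrix.diagonal (fun i => (a i : ℂ)) * Uᴴ) * hermLog hσ :=
      congrArg (· * hermLog hσ) hσdef
    rw [h1, hermLog_eq]
    exact trace_pair U W hU hW a (fun i => Real.log (a i)) (fun j => Real.log (hσ.eigenvalues j))
      hmatch
  set Wρ : Matrix (Fin d) (Fin d) ℂ := (hρ.eigenvectorUnitary : Matrix (Fin d) (Fin d) ℂ)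
    with hWρdef
  have hWρ : Wρ ∈ Matrix.unitaryGroup (Fin d) ℂ := SetLike.coe_mem _
  have hEρ : V * Matrix.diagonal (fun i : Fin d => (r i.1 : ℂ)) * Vᴴ
      = Wρ * Matrix.diagonal (fun i => ((hρ.eigenvalues i : ℝ) : ℂ)) * Wρᴴ := by
    rw [← hρdef]; exact spectral' hρ
  have hmatchρ : ∀ i j, (Vᴴ * Wρ) i j ≠ 0 → r i.1 = hρ.eigenvalues j :=
    intertwine hV hWρ hEρ
  obtain ⟨hP1, hP2⟩ := Q_unitary hV hWρ
  set C : Fin d → Fin d → ℝ := fun k j => Complex.normSq ((Vᴴ * Wρ) k j) with hCdef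
  have hCrow : ∀ k : Fin d, ∑ j, C k j = 1 := fun k => rowsum_one hP1 k
  have hCcol : ∀ j : Fin d, ∑ k, C k j = 1 := fun j => colsum_one hP2 j
  have lognu : ∀ j : Fin d, Real.log (hρ.eigenvalues j) = ∑ k, C k j * Real.log (r k.1) := by
    intro j
    have e : ∀ k ∈ Finset.univ, C k j * Real.log (r k.1)
        = C k j * Real.log (hρ.eigenvalues j) := by
      intro k _
      by_cases h : (Vᴴ * Wρ) k j = 0
      · rw [hCdef]; simp only; rw [h]; simp
      · rw [hmatchρ k j h]
    rw [Finset.sum_congr rfl e, ← Finset.sum_mul, hCcol j, one_mul]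
  constructor
  · intro U hU σ hσdef hσ
    have t1 : (Matrix.trace (σ * hermLog hσ)).re = ∑ i : Fin d, x i.1 * Real.log (x i.1) :=
      trace_hermLog U hU (fun i => x i.1) σ hσdef hσ
    have s1 : (∑ i : Fin d, x i.1 * Real.log (x i.1))
        = ∑ j ∈ range d, x j * Real.log (x j) :=
      Fin.sum_univ_eq_sum_range (fun n => x n * Real.log (x n)) d
    obtain ⟨hQ1, hQ2⟩ := Q_unitary hU hWρ
    set B : Fin d → Fin d → ℝ := fun i j => Complex.normSq ((Uᴴ * Wρ) i j) with hBdef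
    have hBrow : ∀ i : Fin d, ∑ j, B i j = 1 := fun i => rowsum_one hQ1 i
    have hBcol : ∀ j : Fin d, ∑ i, B i j = 1 := fun j => colsum_one hQ2 j
    have t2 : (Matrix.trace (σ * hermLog hρ)).re
        = ∑ i, ∑ j, x i.1 * Real.log (hρ.eigenvalues j) * B i j := by
      have h1 : σ * hermLog hρ
          = (U * Matrix.diagonal (fun i : Fin d => (x i.1 : ℂ)) * Uᴴ) * hermLog hρ :=
        congrArg (· * hermLog hρ) hσdef
      rw [h1, hermLog_eq]
      exact trace_form U Wρ hU (fun i => x i.1) (fun j => Real.log (hρ.eigenvalues j))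
    have t2b : (∑ i : Fin d, ∑ j, x i.1 * Real.log (hρ.eigenvalues j) * B i j)
        = ∑ i : Fin d, ∑ k : Fin d, (∑ j, B i j * C k j) * (x i.1 * Real.log (r k.1)) := by
      apply Finset.sum_congr rfl; intro i _
      calc ∑ j, x i.1 * Real.log (hρ.eigenvalues j) * B i j
          = ∑ j, ∑ k, B i j * C k j * (x i.1 * Real.log (r k.1)) := by
            apply Finset.sum_congr rfl; intro j _
            rw [lognu j, Finset.mul_sum, Finset.sum_mul]
            apply Finset.sum_congr rfl; intro k _; ring
        _ = ∑ k, ∑ j, B i j * C k j * (x i.1 * Real.log (r k.1)) := Finset.sum_comm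
        _ = ∑ k, (∑ j, B i j * C k j) * (x i.1 * Real.log (r k.1)) := by
            apply Finset.sum_congr rfl; intro k _; rw [Finset.sum_mul]
    set Dn : ℕ → ℕ → ℝ := fun i k =>
      if h : i < d ∧ k < d then ∑ j, B ⟨i, h.1⟩ j * C ⟨k, h.2⟩ j else 0 with hDn
    have conv2 : (∑ i : Fin d, ∑ k : Fin d, (∑ j, B i j * C k j) * (x i.1 * Real.log (r k.1)))
        = ∑ i ∈ range d, ∑ k ∈ range d, Dn i k * (x i * Real.log (r k)) := by
      rw [← Fin.sum_univ_eq_sum_range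
        (fun n => ∑ k ∈ range d, Dn n k * (x n * Real.log (r k))) d]
      apply Finset.sum_congr rfl; intro i _
      rw [← Fin.sum_univ_eq_sum_range (fun k => Dn i.1 k * (x i.1 * Real.log (r k))) d]
      apply Finset.sum_congr rfl; intro k _
      have : Dn i.1 k.1 = ∑ j, B i j * C k j := by
        rw [hDn]; exact dif_pos ⟨i.isLt, k.isLt⟩
      rw [this]
    have key := dstoch d Dn x (fun k => Real.log (r k))
      (by
        intro i k hi hk
        rw [hDn]
        simp only
        rw [dif_pos ⟨hi, hk⟩]
        apply Finset.sum_nonneg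
        intro j _
        exact mul_nonneg (Complex.normSq_nonneg _) (Complex.normSq_nonneg _))
      (by
        intro i hi
        rw [← Fin.sum_univ_eq_sum_range (fun k => Dn i k) d]
        have e1 : ∀ k : Fin d, k ∈ Finset.univ → Dn i k.1 = ∑ j, B ⟨i, hi⟩ j * C k j := by
          intro k _
          rw [hDn]; exact dif_pos ⟨hi, k.isLt⟩
        rw [Finset.sum_congr rfl e1, Finset.sum_comm]
        have e2 : ∀ j : Fin d, j ∈ Finset.univ →
            (∑ k, B ⟨i, hi⟩ j * C k j) = B ⟨i, hi⟩ j := by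
          intro j _
          rw [← Finset.mul_sum, hCcol j, mul_one]
        rw [Finset.sum_congr rfl e2, hBrow]
      )
      (by
        intro k hk
        rw [← Fin.sum_univ_eq_sum_range (fun i => Dn i k) d]
        have e1 : ∀ i : Fin d, i ∈ Finset.univ → Dn i.1 k = ∑ j, B i j * C ⟨k, hk⟩ j := by
          intro i _
          rw [hDn]; exact dif_pos ⟨i.isLt, hk⟩
        rw [Finset.sum_congr rfl e1, Finset.sum_comm]
        have e2 : ∀ j : Fin d, j ∈ Finset.univ →
            (∑ i, B i j * C ⟨k, hk⟩ j) = C ⟨k, hk⟩ j := by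
          intro j _
          rw [← Finset.sum_mul, hBcol j, one_mul]
        rw [Finset.sum_congr rfl e2, hCrow]
      )
      (fun i j hij hj => hxmono i j hij hj)
      (fun i hi => hxnn i hi)
      (by
        intro i j hij hj
        have h1 := hrmono i j hij hj
        have h2 := hrpos j hj
        exact Real.log_le_log h2 h1)
    have expand : ∑ j ∈ range d, x j * (Real.log (x j) - Real.log (r j))
        = ∑ j ∈ range d, x j * Real.log (x j) - ∑ j ∈ range d, x j * Real.log (r j) := by
      rw [← Finset.sum_sub_distrib]
      apply Finset.sum_congr rfl; intro j _; ring
    rw [Matrix.trace_sub, Complex.sub_re, t1, t2]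
    have keyr : ∑ i ∈ range d, ∑ k ∈ range d, Dn i k * (x i * Real.log (r k))
        ≤ ∑ i ∈ range d, x i * Real.log (r i) := key
    linarith [keyr, t2b, conv2, s1, expand]
  · refine ⟨V, hV, V * Matrix.diagonal (fun i : Fin d => (x i.1 : ℂ)) * Vᴴ,
      herm_conj V (fun i => x i.1), rfl, ?_, ?_⟩
    · rw [hρdef]
      exact conj_comm V hV _ _
    · have t1 : (Matrix.trace ((V * Matrix.diagonal (fun i : Fin d => (x i.1 : ℂ)) * Vᴴ)
          * hermLog (herm_conj V (fun i => x i.1)))).re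
          = ∑ i : Fin d, x i.1 * Real.log (x i.1) :=
        trace_hermLog V hV (fun i => x i.1) _ rfl (herm_conj V (fun i => x i.1))
      have t2 : (Matrix.trace ((V * Matrix.diagonal (fun i : Fin d => (x i.1 : ℂ)) * Vᴴ)
          * hermLog hρ)).re = ∑ i : Fin d, x i.1 * Real.log (r i.1) := by
        rw [hermLog_eq]
        exact trace_pair V Wρ hV hWρ (fun i => x i.1) (fun i => Real.log (r i.1))
          (fun j => Real.log (hρ.eigenvalues j)) (fun i j h => by
            show Real.log (hρ.eigenvalues j) = Real.log (r i.1)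
            rw [hmatchρ i j h])
      rw [Matrix.trace_sub, Complex.sub_re, t1, t2]
      have s1 : (∑ i : Fin d, x i.1 * Real.log (x i.1))
          = ∑ j ∈ range d, x j * Real.log (x j) :=
        Fin.sum_univ_eq_sum_range (fun n => x n * Real.log (x n)) d
      have s2 : (∑ i : Fin d, x i.1 * Real.log (r i.1))
          = ∑ j ∈ range d, x j * Real.log (r j) :=
        Fin.sum_univ_eq_sum_range (fun n => x n * Real.log (r n)) d
      have expand : ∑ j ∈ range d, x j * (Real.log (x j) - Real.log (r j))
          = ∑ j ∈ range d, x j * Real.log (x j) - ∑ j ∈ range d, x j * Real.log (r j) := by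
        rw [← Finset.sum_sub_distrib]
        apply Finset.sum_congr rfl; intro j _; ring
      rw [s1, s2, expand]
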